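/- If m > c, where m = m_u + σ_min(H)² m_y and c = σ_max(H − H_diag) σ_max(H) L_y, then there exists a unique u∞ ∈ ℝ^N such that F(u∞) = 0, i.e. ∇Φ¹(u∞) + H_diag ∇Φ²(Hu∞ + d) = 0. -/

import Mathlib

set_option maxHeartbeats 1000000

open RealInnerProductSpace

/-- Largest singular value of a square matrix: the operator 2-norm of `v ↦ M v`
on Euclidean space. -/
noncomputable def sigmaMax {N : ℕ} (M : Matrix (Fin N) (Fin N) ℝ) : ℝ :=
  ‖Matrix.toEuclideanCLM (𝕜 := ℝ) M‖

/-- Smallest singular value of a square matrix: the infimum of `‖M v‖` over the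
unit sphere of Euclidean space. -/
noncomputable def sigmaMin {N : ℕ} (M : Matrix (Fin N) (Fin N) ℝ) : ℝ :=
  sInf ((fun v : EuclideanSpace ℝ (Fin N) => ‖Matrix.toEuclideanCLM (𝕜 := ℝ) M v‖) '' {v | ‖v‖ = 1})

/-- Matrix-vector multiplication as a map on Euclidean space. -/
noncomputable def mulV {N : ℕ} (M : Matrix (Fin N) (Fin N) ℝ) (v : EuclideanSpace ℝ (Fin N)) :
    EuclideanSpace ℝ (Fin N) :=
  Matrix.toEuclideanCLM (𝕜 := ℝ) M v

lemma sigmaMin_nonneg {N : ℕ} (M : Matrix (Fin N) (Fin N) ℝ) : 0 ≤ sigmaMin M :=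
  Real.sInf_nonneg (by rintro x ⟨v, _, rfl⟩; exact norm_nonneg _)

lemma sigmaMin_le {N : ℕ} (hN : 0 < N) (M : Matrix (Fin N) (Fin N) ℝ)
    (v : EuclideanSpace ℝ (Fin N)) : sigmaMin M * ‖v‖ ≤ ‖mulV M v‖ := by
  rcases eq_or_ne v 0 with rfl | hv
  · simp [mulV]
  · have hnv : (0:ℝ) < ‖v‖ := norm_pos_iff.mpr hv
    set w : EuclideanSpace ℝ (Fin N) := ‖v‖⁻¹ • v with hw
    have hnw : ‖w‖ = 1 := by
      rw [hw, norm_smul, norm_inv, norm_norm, inv_mul_cancel₀ hnv.ne']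
    have hmem : ‖Matrix.toEuclideanCLM (𝕜 := ℝ) M w‖ ∈
        ((fun v : EuclideanSpace ℝ (Fin N) => ‖Matrix.toEuclideanCLM (𝕜 := ℝ) M v‖) '' {v | ‖v‖ = 1}) :=
      ⟨w, hnw, rfl⟩
    have hbdd : BddBelow ((fun v : EuclideanSpace ℝ (Fin N) => ‖Matrix.toEuclideanCLM (𝕜 := ℝ) M v‖) '' {v | ‖v‖ = 1}) :=
      ⟨0, by rintro x ⟨u, _, rfl⟩; exact norm_nonneg _⟩
    have h1 : sigmaMin M ≤ ‖Matrix.toEuclideanCLM (𝕜 := ℝ) M w‖ := csInf_le hbdd hmem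
    have h2 : ‖Matrix.toEuclideanCLM (𝕜 := ℝ) M w‖ = ‖v‖⁻¹ * ‖mulV M v‖ := by
      rw [hw, map_smul, norm_smul, norm_inv, norm_norm]; rfl
    rw [h2] at h1
    calc sigmaMin M * ‖v‖ ≤ (‖v‖⁻¹ * ‖mulV M v‖) * ‖v‖ := by nlinarith
      _ = ‖mulV M v‖ := by field_simp

lemma mulV_le {N : ℕ} (M : Matrix (Fin N) (Fin N) ℝ) (v : EuclideanSpace ℝ (Fin N)) :
    ‖mulV M v‖ ≤ sigmaMax M * ‖v‖ :=
  (Matrix.toEuclideanCLM (𝕜 := ℝ) M).le_opNorm v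

lemma mulV_sub {N : ℕ} (M : Matrix (Fin N) (Fin N) ℝ) (x y : EuclideanSpace ℝ (Fin N)) :
    mulV M (x - y) = mulV M x - mulV M y := map_sub _ _ _

lemma mulV_matsub {N : ℕ} (M M' : Matrix (Fin N) (Fin N) ℝ) (x : EuclideanSpace ℝ (Fin N)) :
    mulV (M - M') x = mulV M x - mulV M' x := by
  unfold mulV; rw [map_sub]; rfl

lemma diag_selfadj {N : ℕ} (f : Fin N → ℝ) (x y : EuclideanSpace ℝ (Fin N)) :
    ⟪mulV (Matrix.diagonal f) x, y⟫ = ⟪x, mulV (Matrix.diagonal f) y⟫ := by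
  have hsa : Matrix.toEuclideanCLM (𝕜 := ℝ) (Matrix.diagonal f) =
      ContinuousLinearMap.adjoint (Matrix.toEuclideanCLM (𝕜 := ℝ) (Matrix.diagonal f)) := by
    rw [← ContinuousLinearMap.star_eq_adjoint, ← map_star]
    congr 1
    simp [Matrix.star_eq_conjTranspose, Matrix.diagonal_conjTranspose]
  show ⟪Matrix.toEuclideanCLM (𝕜 := ℝ) (Matrix.diagonal f) x, y⟫ = _
  rw [hsa, ContinuousLinearMap.adjoint_inner_left]; rfl

/-- If `m > c`, where `m = m_u + σ_min(H)² m_y` and `c = σ_max(H − H_diag) σ_max(H) L_y`,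
then the decentralized pseudo-gradient map `F(u) = ∇Φ¹(u) + H_diag ∇Φ²(H u + d)`
has a unique zero `u∞`. -/
theorem stmt2 {N : ℕ} (hN : 0 < N)
    (H : Matrix (Fin N) (Fin N) ℝ) (d : EuclideanSpace ℝ (Fin N))
    (Φ1 Φ2 : EuclideanSpace ℝ (Fin N) → ℝ)
    (mu Lu my Ly : ℝ)
    (hmu : 0 < mu) (hmuLu : mu ≤ Lu) (hmy : 0 < my) (hmyLy : my ≤ Ly)
    (hΦ1diff : Differentiable ℝ Φ1) (hΦ2diff : Differentiable ℝ Φ2)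
    (hΦ1mono : ∀ a b, mu * ‖a - b‖ ^ 2 ≤ ⟪gradient Φ1 a - gradient Φ1 b, a - b⟫)
    (hΦ1lip : ∀ a b, ‖gradient Φ1 a - gradient Φ1 b‖ ≤ Lu * ‖a - b‖)
    (hΦ2mono : ∀ a b, my * ‖a - b‖ ^ 2 ≤ ⟪gradient Φ2 a - gradient Φ2 b, a - b⟫)
    (hΦ2lip : ∀ a b, ‖gradient Φ2 a - gradient Φ2 b‖ ≤ Ly * ‖a - b‖)
    (Hdiag : Matrix (Fin N) (Fin N) ℝ)
    (hHdiag : Hdiag = Matrix.diagonal (fun i => H i i))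
    (F : EuclideanSpace ℝ (Fin N) → EuclideanSpace ℝ (Fin N))
    (hF : ∀ u, F u = gradient Φ1 u + mulV Hdiag (gradient Φ2 (mulV H u + d)))
    (m c : ℝ)
    (hm : m = mu + sigmaMin H ^ 2 * my)
    (hc : c = sigmaMax (H - Hdiag) * sigmaMax H * Ly)
    (hmc : m > c) :
    ∃! uinf : EuclideanSpace ℝ (Fin N), F uinf = 0 := by
  set μ : ℝ := m - c with hμdef
  have hμ : 0 < μ := sub_pos.mpr hmc
  set L : ℝ := Lu + sigmaMax Hdiag * (Ly * sigmaMax H) with hLdef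
  have hσd : 0 ≤ sigmaMax Hdiag := norm_nonneg _
  have hσH : 0 ≤ sigmaMax H := norm_nonneg _
  have hσE : 0 ≤ sigmaMax (H - Hdiag) := norm_nonneg _
  have hLy0 : 0 < Ly := lt_of_lt_of_le hmy hmyLy
  have hL : 0 < L := by
    have : 0 ≤ sigmaMax Hdiag * (Ly * sigmaMax H) := by positivity
    have : 0 < Lu := lt_of_lt_of_le hmu hmuLu
    rw [hLdef]; linarith
  -- strong monotonicity of F
  have hmono : ∀ a b, μ * ‖a - b‖ ^ 2 ≤ ⟪F a - F b, a - b⟫ := by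
    intro a b
    set p := mulV H a + d with hp
    set q := mulV H b + d with hq
    set g : EuclideanSpace ℝ (Fin N) := gradient Φ2 p - gradient Φ2 q with hg
    have hpq : p - q = mulV H (a - b) := by
      rw [hp, hq, mulV_sub]; abel
    have hFd : F a - F b = (gradient Φ1 a - gradient Φ1 b) + mulV Hdiag g := by
      rw [hF, hF, hg, mulV_sub]; abel
    have hinner : ⟪F a - F b, a - b⟫ =
        ⟪gradient Φ1 a - gradient Φ1 b, a - b⟫ + ⟪mulV Hdiag g, a - b⟫ := by
      rw [hFd, inner_add_left]
    have hsplit : ⟪mulV Hdiag g, a - b⟫ =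
        ⟪g, mulV H (a - b)⟫ - ⟪g, mulV (H - Hdiag) (a - b)⟫ := by
      rw [hHdiag, diag_selfadj, mulV_matsub, inner_sub_right, ← hHdiag]
      ring
    have h1 : my * ‖mulV H (a - b)‖ ^ 2 ≤ ⟪g, mulV H (a - b)⟫ := by
      rw [← hpq, hg]; exact hΦ2mono p q
    have h2 : sigmaMin H ^ 2 * my * ‖a - b‖ ^ 2 ≤ my * ‖mulV H (a - b)‖ ^ 2 := by
      have hle := sigmaMin_le hN H (a - b)
      have h0 : 0 ≤ sigmaMin H := sigmaMin_nonneg H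
      have h0' : (0:ℝ) ≤ sigmaMin H * ‖a - b‖ := by positivity
      have hsq := mul_self_le_mul_self h0' hle
      nlinarith [hmy]
    have hgn : ‖g‖ ≤ Ly * (sigmaMax H * ‖a - b‖) := by
      have := hΦ2lip p q
      have h2 : ‖p - q‖ ≤ sigmaMax H * ‖a - b‖ := by rw [hpq]; exact mulV_le H (a - b)
      calc ‖g‖ ≤ Ly * ‖p - q‖ := this
        _ ≤ Ly * (sigmaMax H * ‖a - b‖) := by nlinarith
    have h3 : ⟪g, mulV (H - Hdiag) (a - b)⟫ ≤ c * ‖a - b‖ ^ 2 := by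
      have habs : ⟪g, mulV (H - Hdiag) (a - b)⟫ ≤ ‖g‖ * ‖mulV (H - Hdiag) (a - b)‖ :=
        real_inner_le_norm _ _
      have hE : ‖mulV (H - Hdiag) (a - b)‖ ≤ sigmaMax (H - Hdiag) * ‖a - b‖ := mulV_le _ _
      have hgn0 : 0 ≤ ‖g‖ := norm_nonneg _
      have := norm_nonneg (a - b)
      calc ⟪g, mulV (H - Hdiag) (a - b)⟫ ≤ ‖g‖ * ‖mulV (H - Hdiag) (a - b)‖ := habs
        _ ≤ (Ly * (sigmaMax H * ‖a - b‖)) * (sigmaMax (H - Hdiag) * ‖a - b‖) := by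
            nlinarith [norm_nonneg (mulV (H - Hdiag) (a - b))]
        _ = c * ‖a - b‖ ^ 2 := by rw [hc]; ring
    have h4 := hΦ1mono a b
    rw [hinner, hsplit]
    have : μ * ‖a - b‖ ^ 2 = mu * ‖a - b‖ ^ 2 + sigmaMin H ^ 2 * my * ‖a - b‖ ^ 2
        - c * ‖a - b‖ ^ 2 := by rw [hμdef, hm]; ring
    rw [this]
    linarith
  -- Lipschitz continuity of F
  have hlip : ∀ a b, ‖F a - F b‖ ≤ L * ‖a - b‖ := by
    intro a b
    set p := mulV H a + d with hp
    set q := mulV H b + d with hq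
    set g : EuclideanSpace ℝ (Fin N) := gradient Φ2 p - gradient Φ2 q with hg
    have hpq : p - q = mulV H (a - b) := by rw [hp, hq, mulV_sub]; abel
    have hFd : F a - F b = (gradient Φ1 a - gradient Φ1 b) + mulV Hdiag g := by
      rw [hF, hF, hg, mulV_sub]; abel
    have hgn : ‖g‖ ≤ Ly * (sigmaMax H * ‖a - b‖) := by
      have h2 : ‖p - q‖ ≤ sigmaMax H * ‖a - b‖ := by rw [hpq]; exact mulV_le H (a - b)
      calc ‖g‖ ≤ Ly * ‖p - q‖ := hΦ2lip p q
        _ ≤ Ly * (sigmaMax H * ‖a - b‖) := by nlinarith [norm_nonneg (p - q)]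
    calc ‖F a - F b‖ ≤ ‖gradient Φ1 a - gradient Φ1 b‖ + ‖mulV Hdiag g‖ := by
          rw [hFd]; exact norm_add_le _ _
      _ ≤ Lu * ‖a - b‖ + sigmaMax Hdiag * ‖g‖ := by
          have := mulV_le Hdiag g
          have := hΦ1lip a b
          linarith
      _ ≤ Lu * ‖a - b‖ + sigmaMax Hdiag * (Ly * (sigmaMax H * ‖a - b‖)) := by nlinarith
      _ = L * ‖a - b‖ := by rw [hLdef]; ring
  -- μ ≤ L
  have hμL : μ ≤ L := by
    set x : EuclideanSpace ℝ (Fin N) := EuclideanSpace.single ⟨0, hN⟩ (1:ℝ) with hx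
    have hxn : ‖x‖ = 1 := by rw [hx, EuclideanSpace.norm_single]; norm_num
    have h1 := hmono x 0
    have h2 := hlip x 0
    have h3 : ⟪F x - F 0, x - 0⟫ ≤ ‖F x - F 0‖ * ‖x - 0‖ := real_inner_le_norm _ _
    rw [sub_zero] at h1 h2 h3
    rw [hxn] at h1 h2 h3
    nlinarith
  clear_value μ L
  -- contraction map
  obtain ⟨γ, hγdef⟩ : ∃ γ : ℝ, γ = μ / L ^ 2 := ⟨_, rfl⟩
  have hγ : 0 < γ := by rw [hγdef]; positivity
  set T : EuclideanSpace ℝ (Fin N) → EuclideanSpace ℝ (Fin N) := fun u => u - γ • F u with hT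
  have hKsq : (0:ℝ) ≤ 1 - μ ^ 2 / L ^ 2 := by
    rw [sub_nonneg, div_le_one (by positivity)]
    nlinarith
  obtain ⟨K, hK⟩ : ∃ K : ℝ, K = Real.sqrt (1 - μ ^ 2 / L ^ 2) := ⟨_, rfl⟩
  have hK0 : 0 ≤ K := by rw [hK]; exact Real.sqrt_nonneg _
  have hKsq' : K ^ 2 = 1 - μ ^ 2 / L ^ 2 := by rw [hK]; exact Real.sq_sqrt hKsq
  have hK1 : K < 1 := by
    have hpos : 0 < μ ^ 2 / L ^ 2 := by positivity
    nlinarith [hpos, hKsq', hK0]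
  have hTlip : ∀ a b, ‖T a - T b‖ ≤ K * ‖a - b‖ := by
    intro a b
    have hTd : T a - T b = (a - b) - γ • (F a - F b) := by
      rw [hT]; simp only [smul_sub]; abel
    have hexp : ‖T a - T b‖ ^ 2 =
        ‖a - b‖ ^ 2 - 2 * (γ * ⟪F a - F b, a - b⟫) + γ ^ 2 * ‖F a - F b‖ ^ 2 := by
      rw [hTd, @norm_sub_sq_real, real_inner_smul_right, norm_smul, real_inner_comm,
        Real.norm_eq_abs, abs_of_pos hγ, mul_pow]
      try ring
    have h1 := hmono a b
    have h2 := hlip a b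
    have h3 : ‖F a - F b‖ ^ 2 ≤ L ^ 2 * ‖a - b‖ ^ 2 := by
      nlinarith [norm_nonneg (F a - F b), norm_nonneg (a - b)]
    have hb : ‖T a - T b‖ ^ 2 ≤ K ^ 2 * ‖a - b‖ ^ 2 := by
      rw [hexp, hKsq']
      have g1 : γ * (μ * ‖a - b‖ ^ 2) ≤ γ * ⟪F a - F b, a - b⟫ :=
        mul_le_mul_of_nonneg_left h1 hγ.le
      have g2 : γ ^ 2 * ‖F a - F b‖ ^ 2 ≤ γ ^ 2 * (L ^ 2 * ‖a - b‖ ^ 2) :=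
        mul_le_mul_of_nonneg_left h3 (sq_nonneg γ)
      have heq : ‖a - b‖ ^ 2 - 2 * (γ * (μ * ‖a - b‖ ^ 2)) + γ ^ 2 * (L ^ 2 * ‖a - b‖ ^ 2)
          = (1 - μ ^ 2 / L ^ 2) * ‖a - b‖ ^ 2 := by
        rw [hγdef]; field_simp; ring
      linarith
    nlinarith [norm_nonneg (T a - T b), norm_nonneg (a - b), hb,
      mul_nonneg hK0 (norm_nonneg (a - b))]
  set K' : NNReal := ⟨K, hK0⟩ with hK'
  have hcontr : ContractingWith K' T := by
    constructor
    · exact_mod_cast hK1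
    · apply LipschitzWith.of_dist_le_mul
      intro a b
      rw [dist_eq_norm, dist_eq_norm]
      exact hTlip a b
  haveI : Nonempty (EuclideanSpace ℝ (Fin N)) := ⟨0⟩
  obtain ⟨u, hfix⟩ : ∃ u, T u = u := ⟨_, hcontr.fixedPoint_isFixedPt⟩
  have hFu : F u = 0 := by
    have : u - γ • F u = u := hfix
    have h0 : γ • F u = 0 := by
      have := sub_eq_self.mp this
      exact this
    rcases smul_eq_zero.mp h0 with h | h
    · exact absurd h hγ.ne'
    · exact h
  refine ⟨u, hFu, ?_⟩
  intro y hy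
  have := hmono y u
  rw [hy, hFu, sub_zero] at this
  have h0 : ⟪(0 : EuclideanSpace ℝ (Fin N)), y - u⟫ = 0 := inner_zero_left _
  rw [h0] at this
  have hx : ‖y - u‖ ^ 2 ≤ 0 := by
    have h' : μ * ‖y - u‖ ^ 2 ≤ μ * 0 := by rw [mul_zero]; exact this
    exact (mul_le_mul_iff_right₀ hμ).mp h'
  have h3 : ‖y - u‖ ^ 2 = 0 := le_antisymm hx (sq_nonneg _)
  have h4 : ‖y - u‖ = 0 := by
    exact pow_eq_zero_iff two_ne_zero |>.mp h3
  exact sub_eq_zero.mp (norm_eq_zero.mp h4)
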